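/- Consider a two-sender instance over a finite field F with parts P_1, P_2, P_{12}, side-information sets K_i, and eavesdropper set A with A_T = A ∩ P_T. Assume the interactions between P_2 and P_{12} are fully participated in both directions: P_{12} ⊆ K_i for every i ∈ P_2, and P_2 ⊆ K_j for every j ∈ P_{12}. Suppose for each T ∈ {1, 2, {1,2}} there exists a matrix G_T ∈ F^{l_T×|P_T|} that is a valid index code for the sub-instance induced on P_T and weakly secure against A_T. Then the code in which sender 2 transmits the symbolwise sum of G_2x^{(2)} and G_{12}x^{(12)} (the shorter codeword zero-padded to length max{l_2, l_{12}}) and sender 1 transmits G_1x^{(1)} is a valid weakly secure two-sender linear index code for the full instance of total length max{l_{12}, l_2} + l_1. In particular l* ≤ max{l*_{12}, l*_2} + l*_1. -/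
import Mathlib


open Matrix Sum

attribute [local instance] Classical.propDecidable

noncomputable section

variable (F : Type*) [Field F] [Fintype F]

/-- The row space of a matrix: the span of its rows. -/
def rowSpace {ρ ι : Type*} (G : Matrix ρ ι F) : Submodule F (ι → F) :=
  Submodule.span F (Set.range fun r j => G r j)

/-- Weak security of the linear code `x ↦ G x` against an eavesdropper knowing `x j` for
`j ∈ A`: for every `i ∉ A` and every `u` supported in `A`, `u + e i` is not in the
row space of `G`. -/
def WeaklySecure {ρ ι : Type*} (G : Matrix ρ ι F) (A : Set ι) : Prop :=
  ∀ i ∉ A, ∀ u : ι → F, (∀ j, u j ≠ 0 → j ∈ A) →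
    u + Pi.single i (1 : F) ∉ rowSpace F G

/-- `G` is a valid index code for side-information sets `K`: every receiver `i` can
decode `x i` from the codeword `G.mulVec x` and its side information `x|_{K i}`. -/
def ValidCode {ρ ι : Type*} [Fintype ι] (K : ι → Set ι) (G : Matrix ρ ι F) : Prop :=
  ∀ i : ι, ∃ D : (ρ → F) → (↥(K i) → F) → F,
    ∀ x : ι → F, D (G.mulVec x) (fun j => x j.1) = x i

/-- `G` has two-sender form for the parts `P1`, `P2`: its rows split into sender-1 rows,
zero on all columns in `P2`, and sender-2 rows, zero on all columns in `P1`. -/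
def TwoSenderForm {ρ ι : Type*} (P1 P2 : Set ι) (G : Matrix ρ ι F) : Prop :=
  ∃ S : Set ρ, (∀ r ∈ S, ∀ j ∈ P2, G r j = 0) ∧ (∀ r ∉ S, ∀ j ∈ P1, G r j = 0)

/-- Achievable lengths of valid weakly secure (single-sender) linear index codes. -/
def oneLens {ι : Type*} [Fintype ι] (K : ι → Set ι) (A : Set ι) : Set ℕ :=
  {l | ∃ G : Matrix (Fin l) ι F, ValidCode F K G ∧ WeaklySecure F G A}

/-- Achievable total lengths of valid weakly secure two-sender linear index codes. -/
def twoLens {ι : Type*} [Fintype ι] (P1 P2 : Set ι) (K : ι → Set ι) (A : Set ι) :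
    Set ℕ :=
  {l | ∃ G : Matrix (Fin l) ι F,
      TwoSenderForm F P1 P2 G ∧ ValidCode F K G ∧ WeaklySecure F G A}

/-- Side-information sets of the sub-instance induced on `S`. -/
def subK {ι : Type*} (K : ι → Set ι) (S : Set ι) : ↥S → Set ↥S :=
  fun i => {j : ↥S | (j : ι) ∈ K (i : ι)}

/-- Extend a matrix with columns indexed by `↥S` to one with columns indexed by `ι`,
filling the new columns with zeros. -/
def extendCols {ρ ι : Type*} (S : Set ι) (G : Matrix ρ ↥S F) : Matrix ρ ι F :=
  Matrix.of fun r => Function.extend (Subtype.val) (G r) (fun _ => 0)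

/-- Zero-pad a matrix with `l` rows to one with `L` rows. -/
def padMat {ι : Type*} (L : ℕ) {l : ℕ} (G : Matrix (Fin l) ι F) : Matrix (Fin L) ι F :=
  Matrix.of fun r j => if h : (r : ℕ) < l then G ⟨(r : ℕ), h⟩ j else 0

-- ### auxiliary lemmas

variable {F}

lemma extendCols_apply_mem {ρ ι : Type*} {S : Set ι} (G : Matrix ρ ↥S F)
    (r : ρ) (j : ↥S) : extendCols F S G r (j : ι) = G r j := by
  simpa [extendCols] using Subtype.val_injective.extend_apply (G r) (fun _ => 0) j

lemma extendCols_apply_notMem {ρ ι : Type*} {S : Set ι} (G : Matrix ρ ↥S F)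
    (r : ρ) {j : ι} (hj : j ∉ S) : extendCols F S G r j = 0 := by
  rw [extendCols]
  exact Function.extend_apply' (G r) (fun _ => 0) j (by rintro ⟨a, rfl⟩; exact hj a.2)

lemma padMat_apply {ι : Type*} {L l : ℕ} (G : Matrix (Fin l) ι F) (r : Fin L) (j : ι) :
    padMat F L G r j = if h : (r : ℕ) < l then G ⟨(r : ℕ), h⟩ j else 0 := rfl

lemma padMat_extendCols_zero {ι : Type*} {L l : ℕ} {S : Set ι} (G : Matrix (Fin l) ↥S F)
    {j : ι} (hj : j ∉ S) (r : Fin L) : padMat F L (extendCols F S G) r j = 0 := by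
  rw [padMat_apply]
  split
  · exact extendCols_apply_notMem _ _ hj
  · rfl

lemma extendCols_mulVec {ρ ι : Type*} [Fintype ι] (S : Set ι) (G : Matrix ρ ↥S F)
    (x : ι → F) (r : ρ) :
    (extendCols F S G).mulVec x r = G.mulVec (fun j => x j) r := by
  show ∑ j, extendCols F S G r j * x j = ∑ j : ↥S, G r j * x j
  calc ∑ j, extendCols F S G r j * x j
      = ∑ j ∈ S.toFinset, extendCols F S G r j * x j :=
        (Finset.sum_subset (Finset.subset_univ _) (fun j _ hj => by
          rw [extendCols_apply_notMem G r (by simpa using hj), zero_mul])).symm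
    _ = ∑ j : ↥S, extendCols F S G r j * x j :=
        Finset.sum_subtype _ (by simp) _
    _ = ∑ j : ↥S, G r j * x j :=
        Finset.sum_congr rfl fun j _ => by rw [extendCols_apply_mem]

lemma padMat_mulVec {ι : Type*} [Fintype ι] {L l : ℕ} (G : Matrix (Fin l) ι F)
    (x : ι → F) (r : Fin L) :
    (padMat F L G).mulVec x r = if h : (r : ℕ) < l then G.mulVec x ⟨(r : ℕ), h⟩ else 0 := by
  by_cases h : (r : ℕ) < l
  · rw [dif_pos h]
    exact Finset.sum_congr rfl fun j _ => by simp only [padMat_apply, dif_pos h]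
  · rw [dif_neg h]
    show ∑ j, padMat F L G r j * x j = 0
    exact Finset.sum_eq_zero fun j _ => by simp only [padMat_apply, dif_neg h, zero_mul]

lemma rowSpace_map_le {ρ σ ι κ : Type*} (f : κ → ι) (G : Matrix ρ ι F)
    (H : Matrix σ κ F) (h : ∀ r, (fun j => G r (f j)) ∈ rowSpace F H) :
    Submodule.map (LinearMap.funLeft F F f) (rowSpace F G) ≤ rowSpace F H := by
  rw [rowSpace, Submodule.map_span, Submodule.span_le]
  rintro _ ⟨_, ⟨r, rfl⟩, rfl⟩
  exact h r

lemma row_mem_rowSpace {ρ ι : Type*} (G : Matrix ρ ι F) (r : ρ) :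
    (fun j => G r j) ∈ rowSpace F G :=
  Submodule.subset_span ⟨r, rfl⟩

-- ### the combined code

lemma combine_props {m a b c : ℕ} (P1 P2 P12 : Set (Fin m))
    (h12 : Disjoint P1 P2) (h112 : Disjoint P1 P12) (h212 : Disjoint P2 P12)
    (hcov : P1 ∪ P2 ∪ P12 = Set.univ)
    (K : Fin m → Set (Fin m))
    (hfull1 : ∀ i ∈ P2, P12 ⊆ K i)
    (hfull2 : ∀ j ∈ P12, P2 ⊆ K j)
    (A : Set (Fin m))
    (G1 : Matrix (Fin a) ↥P1 F) (G2 : Matrix (Fin b) ↥P2 F)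
    (G12 : Matrix (Fin c) ↥P12 F)
    (hG1v : ValidCode F (subK K P1) G1)
    (hG1s : WeaklySecure F G1 (Subtype.val ⁻¹' A))
    (hG2v : ValidCode F (subK K P2) G2)
    (hG2s : WeaklySecure F G2 (Subtype.val ⁻¹' A))
    (hG12v : ValidCode F (subK K P12) G12)
    (hG12s : WeaklySecure F G12 (Subtype.val ⁻¹' A)) :
    let G : Matrix (Fin a ⊕ Fin (max b c)) (Fin m) F :=
      Matrix.of (Sum.elim
        (fun r => extendCols F P1 G1 r)
        (fun r => (padMat F (max b c) (extendCols F P2 G2) +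
          padMat F (max b c) (extendCols F P12 G12)) r))
    (∀ r : Fin a, ∀ j ∈ P2, G (Sum.inl r) j = 0) ∧
    (∀ r : Fin (max b c), ∀ j ∈ P1, G (Sum.inr r) j = 0) ∧
    ValidCode F K G ∧ WeaklySecure F G A := by
  intro G
  have hGl : ∀ (r : Fin a) (j : Fin m), G (Sum.inl r) j = extendCols F P1 G1 r j :=
    fun r j => rfl
  have hGr : ∀ (r : Fin (max b c)) (j : Fin m), G (Sum.inr r) j =
      padMat F (max b c) (extendCols F P2 G2) r j +
      padMat F (max b c) (extendCols F P12 G12) r j := fun r j => rfl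
  have hmvl : ∀ (x : Fin m → F) (r : Fin a),
      G.mulVec x (Sum.inl r) = G1.mulVec (fun j => x j.1) r :=
    fun x r => extendCols_mulVec P1 G1 x r
  have hmvr : ∀ (x : Fin m → F) (r : Fin (max b c)), G.mulVec x (Sum.inr r) =
      (if h : (r : ℕ) < b then G2.mulVec (fun j => x j.1) ⟨(r : ℕ), h⟩ else 0) +
      (if h : (r : ℕ) < c then G12.mulVec (fun j => x j.1) ⟨(r : ℕ), h⟩ else 0) := by
    intro x r
    have h0 : G.mulVec x (Sum.inr r) =
        (padMat F (max b c) (extendCols F P2 G2)).mulVec x r +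
        (padMat F (max b c) (extendCols F P12 G12)).mulVec x r := by
      show ((padMat F (max b c) (extendCols F P2 G2) +
          padMat F (max b c) (extendCols F P12 G12)).mulVec x) r = _
      rw [Matrix.add_mulVec]
      rfl
    rw [h0, padMat_mulVec, padMat_mulVec]
    congr 1
    · split
      · exact extendCols_mulVec _ _ _ _
      · rfl
    · split
      · exact extendCols_mulVec _ _ _ _
      · rfl
  refine ⟨?_, ?_, ?_, ?_⟩
  · intro r j hj
    rw [hGl]
    exact extendCols_apply_notMem G1 r (Set.disjoint_right.mp h12 hj)
  · intro r j hj
    rw [hGr, padMat_extendCols_zero G2 (Set.disjoint_left.mp h12 hj) r,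
      padMat_extendCols_zero G12 (Set.disjoint_left.mp h112 hj) r, add_zero]
  · -- validity
    intro i
    have hiU : i ∈ P1 ∪ P2 ∪ P12 := by rw [hcov]; trivial
    rcases hiU with (hi | hi) | hi
    · obtain ⟨D1, hD1⟩ := hG1v ⟨i, hi⟩
      refine ⟨fun cvec s => D1 (fun r => cvec (Sum.inl r)) (fun j => s ⟨j.1.1, j.2⟩),
        fun x => ?_⟩
      show D1 (fun r => G.mulVec x (Sum.inl r)) (fun j => x j.1.1) = x i
      have harg : (fun r => G.mulVec x (Sum.inl r)) = G1.mulVec (fun j : ↥P1 => x j.1) :=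
        funext fun r => hmvl x r
      rw [harg]
      exact hD1 (fun j => x j.1)
    · obtain ⟨D2, hD2⟩ := hG2v ⟨i, hi⟩
      refine ⟨fun cvec s => D2
          (fun r : Fin b => cvec (Sum.inr ⟨r.1, lt_of_lt_of_le r.2 (le_max_left b c)⟩) -
            (if h : r.1 < c then
              G12.mulVec (fun j : ↥P12 => s ⟨j.1, hfull1 i hi j.2⟩) ⟨r.1, h⟩ else 0))
          (fun j => s ⟨j.1.1, j.2⟩), fun x => ?_⟩
      show D2
          (fun r : Fin b => G.mulVec x (Sum.inr ⟨r.1, lt_of_lt_of_le r.2 (le_max_left b c)⟩) -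
            (if h : r.1 < c then
              G12.mulVec (fun j : ↥P12 => x j.1) ⟨r.1, h⟩ else 0))
          (fun j => x j.1.1) = x i
      have harg : (fun r : Fin b =>
          G.mulVec x (Sum.inr ⟨r.1, lt_of_lt_of_le r.2 (le_max_left b c)⟩) -
            (if h : r.1 < c then
              G12.mulVec (fun j : ↥P12 => x j.1) ⟨r.1, h⟩ else 0))
          = G2.mulVec (fun j : ↥P2 => x j.1) := by
        funext r
        rw [hmvr, dif_pos (show r.1 < b from r.2)]
        exact add_sub_cancel_right _ _
      rw [harg]
      exact hD2 (fun j => x j.1)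
    · obtain ⟨D12, hD12⟩ := hG12v ⟨i, hi⟩
      refine ⟨fun cvec s => D12
          (fun r : Fin c => cvec (Sum.inr ⟨r.1, lt_of_lt_of_le r.2 (le_max_right b c)⟩) -
            (if h : r.1 < b then
              G2.mulVec (fun j : ↥P2 => s ⟨j.1, hfull2 i hi j.2⟩) ⟨r.1, h⟩ else 0))
          (fun j => s ⟨j.1.1, j.2⟩), fun x => ?_⟩
      show D12
          (fun r : Fin c => G.mulVec x (Sum.inr ⟨r.1, lt_of_lt_of_le r.2 (le_max_right b c)⟩) -
            (if h : r.1 < b then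
              G2.mulVec (fun j : ↥P2 => x j.1) ⟨r.1, h⟩ else 0))
          (fun j => x j.1.1) = x i
      have harg : (fun r : Fin c =>
          G.mulVec x (Sum.inr ⟨r.1, lt_of_lt_of_le r.2 (le_max_right b c)⟩) -
            (if h : r.1 < b then
              G2.mulVec (fun j : ↥P2 => x j.1) ⟨r.1, h⟩ else 0))
          = G12.mulVec (fun j : ↥P12 => x j.1) := by
        funext r
        rw [hmvr, dif_pos (show r.1 < c from r.2)]
        rw [add_sub_cancel_left]
      rw [harg]
      exact hD12 (fun j => x j.1)
  · -- weak security
    intro i hiA u hu hmem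
    have hiU : i ∈ P1 ∪ P2 ∪ P12 := by rw [hcov]; trivial
    rcases hiU with (hi | hi) | hi
    · refine hG1s ⟨i, hi⟩ (fun hA' => hiA hA') (fun j => u j.1) (fun j hj => hu j.1 hj) ?_
      have hrows : ∀ r, (fun j : ↥P1 => G r (Subtype.val j)) ∈ rowSpace F G1 := by
        intro r
        cases r with
        | inl r =>
          have he : (fun j : ↥P1 => G (Sum.inl r) (Subtype.val j)) = fun j => G1 r j :=
            funext fun j => extendCols_apply_mem G1 r j
          rw [he]
          exact row_mem_rowSpace G1 r
        | inr r =>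
          have he : (fun j : ↥P1 => G (Sum.inr r) (Subtype.val j)) = (0 : ↥P1 → F) := by
            funext j
            show padMat F (max b c) (extendCols F P2 G2) r j.1 +
              padMat F (max b c) (extendCols F P12 G12) r j.1 = 0
            rw [padMat_extendCols_zero G2 (Set.disjoint_left.mp h12 j.2) r,
              padMat_extendCols_zero G12 (Set.disjoint_left.mp h112 j.2) r, add_zero]
          rw [he]
          exact zero_mem _
      have hmem' := rowSpace_map_le (Subtype.val : ↥P1 → Fin m) G G1 hrows
        (Submodule.mem_map_of_mem hmem)
      convert hmem' using 2
      funext j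
      simp only [LinearMap.funLeft_apply, Function.comp_apply, Pi.add_apply]
      congr 1
      rcases eq_or_ne j ⟨i, hi⟩ with rfl | hne
      · simp [Pi.single_apply]
      · have hne' : (j : Fin m) ≠ i := fun h => hne (Subtype.ext h)
        simp [Pi.single_apply, hne, hne']
    · refine hG2s ⟨i, hi⟩ (fun hA' => hiA hA') (fun j => u j.1) (fun j hj => hu j.1 hj) ?_
      have hrows : ∀ r, (fun j : ↥P2 => G r (Subtype.val j)) ∈ rowSpace F G2 := by
        intro r
        cases r with
        | inl r =>
          have he : (fun j : ↥P2 => G (Sum.inl r) (Subtype.val j)) = (0 : ↥P2 → F) := by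
            funext j
            show extendCols F P1 G1 r j.1 = 0
            exact extendCols_apply_notMem G1 r (Set.disjoint_right.mp h12 j.2)
          rw [he]
          exact zero_mem _
        | inr r =>
          by_cases hb : (r : ℕ) < b
          · have he : (fun j : ↥P2 => G (Sum.inr r) (Subtype.val j)) =
                fun j => G2 ⟨(r : ℕ), hb⟩ j := by
              funext j
              show padMat F (max b c) (extendCols F P2 G2) r j.1 +
                padMat F (max b c) (extendCols F P12 G12) r j.1 = _
              rw [padMat_extendCols_zero G12 (Set.disjoint_left.mp h212 j.2) r, add_zero,
                padMat_apply, dif_pos hb]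
              exact extendCols_apply_mem G2 _ j
            rw [he]
            exact row_mem_rowSpace G2 _
          · have he : (fun j : ↥P2 => G (Sum.inr r) (Subtype.val j)) = (0 : ↥P2 → F) := by
              funext j
              show padMat F (max b c) (extendCols F P2 G2) r j.1 +
                padMat F (max b c) (extendCols F P12 G12) r j.1 = 0
              rw [padMat_extendCols_zero G12 (Set.disjoint_left.mp h212 j.2) r, add_zero,
                padMat_apply, dif_neg hb]
            rw [he]
            exact zero_mem _
      have hmem' := rowSpace_map_le (Subtype.val : ↥P2 → Fin m) G G2 hrows
        (Submodule.mem_map_of_mem hmem)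
      convert hmem' using 2
      funext j
      simp only [LinearMap.funLeft_apply, Function.comp_apply, Pi.add_apply]
      congr 1
      rcases eq_or_ne j ⟨i, hi⟩ with rfl | hne
      · simp [Pi.single_apply]
      · have hne' : (j : Fin m) ≠ i := fun h => hne (Subtype.ext h)
        simp [Pi.single_apply, hne, hne']
    · refine hG12s ⟨i, hi⟩ (fun hA' => hiA hA') (fun j => u j.1) (fun j hj => hu j.1 hj) ?_
      have hrows : ∀ r, (fun j : ↥P12 => G r (Subtype.val j)) ∈ rowSpace F G12 := by
        intro r
        cases r with
        | inl r =>
          have he : (fun j : ↥P12 => G (Sum.inl r) (Subtype.val j)) = (0 : ↥P12 → F) := by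
            funext j
            show extendCols F P1 G1 r j.1 = 0
            exact extendCols_apply_notMem G1 r (Set.disjoint_right.mp h112 j.2)
          rw [he]
          exact zero_mem _
        | inr r =>
          by_cases hc : (r : ℕ) < c
          · have he : (fun j : ↥P12 => G (Sum.inr r) (Subtype.val j)) =
                fun j => G12 ⟨(r : ℕ), hc⟩ j := by
              funext j
              show padMat F (max b c) (extendCols F P2 G2) r j.1 +
                padMat F (max b c) (extendCols F P12 G12) r j.1 = _
              rw [padMat_extendCols_zero G2 (Set.disjoint_right.mp h212 j.2) r, zero_add,
                padMat_apply, dif_pos hc]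
              exact extendCols_apply_mem G12 _ j
            rw [he]
            exact row_mem_rowSpace G12 _
          · have he : (fun j : ↥P12 => G (Sum.inr r) (Subtype.val j)) = (0 : ↥P12 → F) := by
              funext j
              show padMat F (max b c) (extendCols F P2 G2) r j.1 +
                padMat F (max b c) (extendCols F P12 G12) r j.1 = 0
              rw [padMat_extendCols_zero G2 (Set.disjoint_right.mp h212 j.2) r, zero_add,
                padMat_apply, dif_neg hc]
            rw [he]
            exact zero_mem _
      have hmem' := rowSpace_map_le (Subtype.val : ↥P12 → Fin m) G G12 hrows
        (Submodule.mem_map_of_mem hmem)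
      convert hmem' using 2
      funext j
      simp only [LinearMap.funLeft_apply, Function.comp_apply, Pi.add_apply]
      congr 1
      rcases eq_or_ne j ⟨i, hi⟩ with rfl | hne
      · simp [Pi.single_apply]
      · have hne' : (j : Fin m) ≠ i := fun h => hne (Subtype.ext h)
        simp [Pi.single_apply, hne, hne']

lemma twoLens_mem {m a b c : ℕ} (P1 P2 P12 : Set (Fin m))
    (h12 : Disjoint P1 P2) (h112 : Disjoint P1 P12) (h212 : Disjoint P2 P12)
    (hcov : P1 ∪ P2 ∪ P12 = Set.univ)
    (K : Fin m → Set (Fin m))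
    (hfull1 : ∀ i ∈ P2, P12 ⊆ K i) (hfull2 : ∀ j ∈ P12, P2 ⊆ K j)
    (A : Set (Fin m))
    (G1 : Matrix (Fin a) ↥P1 F) (G2 : Matrix (Fin b) ↥P2 F) (G12 : Matrix (Fin c) ↥P12 F)
    (hG1v : ValidCode F (subK K P1) G1) (hG1s : WeaklySecure F G1 (Subtype.val ⁻¹' A))
    (hG2v : ValidCode F (subK K P2) G2) (hG2s : WeaklySecure F G2 (Subtype.val ⁻¹' A))
    (hG12v : ValidCode F (subK K P12) G12) (hG12s : WeaklySecure F G12 (Subtype.val ⁻¹' A)) :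
    (max b c + a) ∈ twoLens F P1 P2 K A := by
  obtain ⟨hz1, hz2, hv, hs⟩ := combine_props P1 P2 P12 h12 h112 h212 hcov K hfull1 hfull2 A
    G1 G2 G12 hG1v hG1s hG2v hG2s hG12v hG12s
  set G : Matrix (Fin a ⊕ Fin (max b c)) (Fin m) F :=
    Matrix.of (Sum.elim
      (fun r => extendCols F P1 G1 r)
      (fun r => (padMat F (max b c) (extendCols F P2 G2) +
        padMat F (max b c) (extendCols F P12 G12)) r)) with hGdef
  let e : Fin (max b c + a) ≃ (Fin a ⊕ Fin (max b c)) :=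
    (finCongr (Nat.add_comm (max b c) a)).trans finSumFinEquiv.symm
  refine ⟨G.submatrix e id, ⟨{r | ∃ r1, e r = Sum.inl r1}, ?_, ?_⟩, ?_, ?_⟩
  · rintro r ⟨r1, hr1⟩ j hj
    show G (e r) j = 0
    rw [hr1]
    exact hz1 r1 j hj
  · intro r hr j hj
    show G (e r) j = 0
    rcases he : e r with r1 | r2
    · exact absurd ⟨r1, he⟩ hr
    · exact hz2 r2 j hj
  · intro i
    obtain ⟨D, hD⟩ := hv i
    refine ⟨fun cvec s => D (fun ρ => cvec (e.symm ρ)) s, fun x => ?_⟩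
    show D (fun ρ => (G.submatrix e id).mulVec x (e.symm ρ)) (fun j => x j.1) = x i
    have harg : (fun ρ => (G.submatrix e id).mulVec x (e.symm ρ)) = G.mulVec x := by
      funext ρ
      show G.mulVec x (e (e.symm ρ)) = G.mulVec x ρ
      rw [Equiv.apply_symm_apply]
    rw [harg]
    exact hD x
  · have hrs : rowSpace F (G.submatrix e id) = rowSpace F G := by
      unfold rowSpace
      congr 1
      have h0 : (fun (r : Fin (max b c + a)) (j : Fin m) => G.submatrix e id r j)
          = (fun (r : Fin a ⊕ Fin (max b c)) (j : Fin m) => G r j) ∘ e := rfl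
      rw [h0, Set.range_comp, Equiv.range_eq_univ, Set.image_univ]
    intro i hiA u hu
    rw [hrs]
    exact hs i hiA u hu


/-- Case II-D, Corollary 3 of the paper.  Suppose the interactions
between `P2` and `P12` are fully participated in both directions and valid weakly secure
codes `G1, G2, G12` exist for the three sub-instances.  Then the code in which sender 2
transmits the symbolwise sum of `G2 x⁽²⁾` and `G12 x⁽¹²⁾` (zero-padded to length
`max {l2, l12}`) and sender 1 transmits `G1 x⁽¹⁾` is a valid weakly secure two-sender
linear index code of total length `max {l12, l2} + l1`; in particular
`l* ≤ max {l*₁₂, l*₂} + l*₁`. -/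
theorem caseIID_code {m l1 l2 l12 : ℕ}
    (P1 P2 P12 : Set (Fin m))
    (h12 : Disjoint P1 P2) (h112 : Disjoint P1 P12) (h212 : Disjoint P2 P12)
    (hcov : P1 ∪ P2 ∪ P12 = Set.univ)
    (K : Fin m → Set (Fin m)) (hK : ∀ i, i ∉ K i)
    (hfull1 : ∀ i ∈ P2, P12 ⊆ K i)
    (hfull2 : ∀ j ∈ P12, P2 ⊆ K j)
    (A : Set (Fin m)) (hA : A ⊂ Set.univ)
    (G1 : Matrix (Fin l1) ↥P1 F) (G2 : Matrix (Fin l2) ↥P2 F)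
    (G12 : Matrix (Fin l12) ↥P12 F)
    (hG1v : ValidCode F (subK K P1) G1)
    (hG1s : WeaklySecure F G1 (Subtype.val ⁻¹' A))
    (hG2v : ValidCode F (subK K P2) G2)
    (hG2s : WeaklySecure F G2 (Subtype.val ⁻¹' A))
    (hG12v : ValidCode F (subK K P12) G12)
    (hG12s : WeaklySecure F G12 (Subtype.val ⁻¹' A)) :
    let G : Matrix (Fin l1 ⊕ Fin (max l2 l12)) (Fin m) F :=
      Matrix.of (Sum.elim
        (fun r => extendCols F P1 G1 r)
        (fun r => (padMat F (max l2 l12) (extendCols F P2 G2) +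
          padMat F (max l2 l12) (extendCols F P12 G12)) r))
    (∀ r : Fin l1, ∀ j ∈ P2, G (Sum.inl r) j = 0) ∧
    (∀ r : Fin (max l2 l12), ∀ j ∈ P1, G (Sum.inr r) j = 0) ∧
    ValidCode F K G ∧ WeaklySecure F G A ∧
    sInf (twoLens F P1 P2 K A) ≤
      max (sInf (oneLens F (subK K P12) (Subtype.val ⁻¹' A)))
          (sInf (oneLens F (subK K P2) (Subtype.val ⁻¹' A))) +
        sInf (oneLens F (subK K P1) (Subtype.val ⁻¹' A)) := by
  intro G
  obtain ⟨hz1, hz2, hv, hs⟩ := combine_props P1 P2 P12 h12 h112 h212 hcov K hfull1 hfull2 A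
    G1 G2 G12 hG1v hG1s hG2v hG2s hG12v hG12s
  refine ⟨hz1, hz2, hv, hs, ?_⟩
  have hne1 : (oneLens F (subK K P1) (Subtype.val ⁻¹' A)).Nonempty := ⟨l1, G1, hG1v, hG1s⟩
  have hne2 : (oneLens F (subK K P2) (Subtype.val ⁻¹' A)).Nonempty := ⟨l2, G2, hG2v, hG2s⟩
  have hne12 : (oneLens F (subK K P12) (Subtype.val ⁻¹' A)).Nonempty :=
    ⟨l12, G12, hG12v, hG12s⟩
  obtain ⟨G1', h1v, h1s⟩ := Nat.sInf_mem hne1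
  obtain ⟨G2', h2v, h2s⟩ := Nat.sInf_mem hne2
  obtain ⟨G12', h12v', h12s'⟩ := Nat.sInf_mem hne12
  have hmem := twoLens_mem P1 P2 P12 h12 h112 h212 hcov K hfull1 hfull2 A G1' G2' G12'
    h1v h1s h2v h2s h12v' h12s'
  have hle := Nat.sInf_le hmem
  rwa [max_comm (sInf (oneLens F (subK K P2) (Subtype.val ⁻¹' A)))
    (sInf (oneLens F (subK K P12) (Subtype.val ⁻¹' A)))] at hle
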